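/- Let K be a field, k ≥ 1, and let M ∈ K^{k×k} be invertible. Define Δ ∈ U^{2k−1}(K) by Δ_{r,c} = M_{r, c−k+1} for 1 ≤ r ≤ k and k ≤ c ≤ 2k−1, and Δ_{r,c} = 0 otherwise. Then frk(Δ) = k². -/

import Mathlib

/-- The space `U^n(K)` of upper triangular `n × n` matrices over `K`,
as a `K`-subspace of the matrix space. -/
def UT (K : Type*) [Field K] (n : ℕ) : Submodule K (Matrix (Fin n) (Fin n) K) where
  carrier := {A | ∀ i j : Fin n, (j : ℕ) < (i : ℕ) → A i j = 0}
  add_mem' := by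
    intro a b ha hb i j h
    simp [Matrix.add_apply, ha i j h, hb i j h]
  zero_mem' := by
    intro i j h
    simp
  smul_mem' := by
    intro c a ha i j h
    simp [Matrix.smul_apply, ha i j h]

/-- For `Δ ∈ U^n(K)` and `i : Fin n` (representing the 1-indexed value `i+1`),
the upper-right corner submatrix `Δ_[i+1] ∈ K^{(i+1) × (n+1-(i+1))}`,
consisting of the entries `Δ_{k,ℓ}` with (1-indexed) `1 ≤ k ≤ i+1`, `i+1 ≤ ℓ ≤ n`. -/
def corner {K : Type*} [Field K] {n : ℕ} (Δ : Matrix (Fin n) (Fin n) K) (i : Fin n) :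
    Matrix (Fin ((i : ℕ) + 1)) (Fin (n + 1 - ((i : ℕ) + 1))) K :=
  Matrix.of fun k l =>
    Δ ⟨k, by have := k.isLt; have := i.isLt; omega⟩
      ⟨(i : ℕ) + l, by have := l.isLt; have := i.isLt; omega⟩

/-- The flag rank of an upper triangular matrix: the sum of the ranks of its
upper-right corner submatrices, `frk Δ = Σ_{i=1}^{n} rank Δ_[i]`. -/
noncomputable def frk {K : Type*} [Field K] {n : ℕ} (Δ : Matrix (Fin n) (Fin n) K) : ℕ :=
  ∑ i : Fin n, (corner Δ i).rank


private lemma sum_min_arith_aux (k : ℕ) (hk : 1 ≤ k) :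
    ∑ i ∈ Finset.range (2 * k - 1),
      (if i < k then i + 1 else 2 * k - 1 - i) = k ^ 2 := by
  obtain ⟨m, rfl⟩ : ∃ m, k = m + 1 := ⟨k - 1, by omega⟩
  set k := m + 1 with hkdef
  rw [Finset.range_eq_Ico, ← Finset.sum_Ico_consecutive _ (Nat.zero_le k) (by omega : k ≤ 2 * k - 1)]
  have h1 : ∑ i ∈ Finset.Ico 0 k, (if i < k then i + 1 else 2 * k - 1 - i)
      = ∑ i ∈ Finset.range k, (i + 1) := by
    rw [← Finset.range_eq_Ico]
    exact Finset.sum_congr rfl fun i hi => by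
      rw [Finset.mem_range] at hi; simp [hi]
  have h2 : ∑ i ∈ Finset.Ico k (2 * k - 1), (if i < k then i + 1 else 2 * k - 1 - i)
      = ∑ i ∈ Finset.range m, (i + 1) := by
    rw [Finset.sum_Ico_eq_sum_range]
    have hm : 2 * k - 1 - k = m := by omega
    rw [hm]
    rw [← Finset.sum_range_reflect (fun i => i + 1) m]
    exact Finset.sum_congr rfl fun i hi => by
      rw [Finset.mem_range] at hi
      rw [if_neg (by omega)]
      omega
  rw [h1, h2]
  have g1 : (∑ i ∈ Finset.range k, (i + 1)) = ∑ i ∈ Finset.range (k + 1), i := by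
    rw [Finset.sum_range_succ' (fun i => i) k]; simp
  have g2 : (∑ i ∈ Finset.range m, (i + 1)) = ∑ i ∈ Finset.range (m + 1), i := by
    rw [Finset.sum_range_succ' (fun i => i) m]; simp
  rw [g1, g2]
  have G1 := Finset.sum_range_id_mul_two (k + 1)
  have G2 := Finset.sum_range_id_mul_two (m + 1)
  simp only [hkdef, Nat.add_sub_cancel] at G1 G2
  nlinarith [G1, G2]

/-- Even case: let `M ∈ K^{k×k}` be invertible and let `Δ ∈ U^{2k-1}(K)` have the block
form with `M` in the upper right corner (1-indexed: `Δ_{r,c} = M_{r, c-k+1}` for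
`1 ≤ r ≤ k`, `k ≤ c ≤ 2k-1`, and `Δ_{r,c} = 0` otherwise; here everything is 0-indexed).
Then `frk Δ = k²`. -/
theorem frk_corner_block_even {K : Type*} [Field K] (k : ℕ) (hk : 1 ≤ k)
    (M : Matrix (Fin k) (Fin k) K) (hM : IsUnit M)
    (Δ : Matrix (Fin (2 * k - 1)) (Fin (2 * k - 1)) K)
    (hΔ : ∀ r c : Fin (2 * k - 1),
      Δ r c = if h : (r : ℕ) < k ∧ k - 1 ≤ (c : ℕ) then
          M ⟨r, h.1⟩ ⟨(c : ℕ) - (k - 1), by have := c.isLt; omega⟩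
        else 0) :
    frk Δ = k ^ 2 := by
  have key : ∀ i : Fin (2 * k - 1), (corner Δ i).rank =
      if (i : ℕ) < k then (i : ℕ) + 1 else 2 * k - 1 - (i : ℕ) := by
    intro i
    have hi2 : (i : ℕ) < 2 * k - 1 := i.isLt
    by_cases hik : (i : ℕ) < k
    · rw [if_pos hik]
      let g : Fin k → Fin (2 * k - 1 + 1 - ((i : ℕ) + 1)) :=
        fun j => ⟨k - 1 - (i : ℕ) + j, by have := j.isLt; omega⟩
      let T : (Fin (2 * k - 1 + 1 - ((i : ℕ) + 1)) → K) →ₗ[K] (Fin k → K) :=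
        LinearMap.funLeft K K g
      have hcomp : (⇑T ∘ fun r : Fin ((i : ℕ) + 1) => corner Δ i r) =
          (fun r : Fin k => M r) ∘
            (fun r : Fin ((i : ℕ) + 1) => (⟨r, by have := r.isLt; omega⟩ : Fin k)) := by
        funext r j
        simp only [T, LinearMap.funLeft_apply, Function.comp_apply, corner, Matrix.of_apply]
        rw [hΔ]
        rw [dif_pos ⟨by simp only [Fin.val_mk]; omega, by simp only [g, Fin.val_mk]; omega⟩]
        all_goals congr 1 <;> (apply Fin.ext; simp only [g, Fin.val_mk]; omega)
      have hli : LinearIndependent K (fun r : Fin ((i : ℕ) + 1) => corner Δ i r) := by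
        apply LinearIndependent.of_comp T
        rw [hcomp]
        exact (Matrix.linearIndependent_rows_iff_isUnit.2 hM).comp _
          (fun a b hab => by simpa [Fin.ext_iff] using hab)
      have h := hli.rank_matrix
      rw [Fintype.card_fin] at h; exact h
    · rw [if_neg hik]
      have hk1 : k - 1 ≤ (i : ℕ) := by omega
      let g : Fin (2 * k - 1 + 1 - ((i : ℕ) + 1)) → Fin k :=
        fun l => ⟨(i : ℕ) + l - (k - 1), by have := l.isLt; omega⟩
      let T : (Fin ((i : ℕ) + 1) → K) →ₗ[K] (Fin k → K) :=
        LinearMap.funLeft K K (fun r : Fin k => (⟨r, by have := r.isLt; omega⟩ : Fin ((i : ℕ) + 1)))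
      have hcomp : (⇑T ∘ fun l => (corner Δ i).transpose l) = (fun j : Fin k => M.transpose j) ∘ g := by
        funext l r
        simp only [T, LinearMap.funLeft_apply, Function.comp_apply, Matrix.transpose_apply,
          corner, Matrix.of_apply]
        rw [hΔ]
        rw [dif_pos ⟨by simp only [Fin.val_mk]; exact r.isLt, by simp only [Fin.val_mk]; omega⟩]
        all_goals congr 1 <;> (apply Fin.ext; simp only [g, Fin.val_mk]; omega)
      have hli : LinearIndependent K (fun l => (corner Δ i).transpose l) := by
        apply LinearIndependent.of_comp T
        rw [hcomp]
        exact (Matrix.linearIndependent_cols_iff_isUnit.2 hM).comp _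
          (fun a b hab => by
            simp only [g, Fin.mk.injEq] at hab
            have := a.isLt; have := b.isLt
            exact Fin.ext (by omega))
      have h := hli.rank_matrix
      rw [← Matrix.rank_transpose, show (corner Δ i).transpose = Matrix.of fun x y => corner Δ i y x from rfl, h]
      simp only [Fintype.card_fin]
      omega
  unfold frk
  calc ∑ i : Fin (2 * k - 1), (corner Δ i).rank
      = ∑ i : Fin (2 * k - 1),
          (if (i : ℕ) < k then (i : ℕ) + 1 else 2 * k - 1 - (i : ℕ)) :=
        Finset.sum_congr rfl fun i _ => key i
    _ = ∑ i ∈ Finset.range (2 * k - 1), (if i < k then i + 1 else 2 * k - 1 - i) :=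
        Fin.sum_univ_eq_sum_range (fun i => if i < k then i + 1 else 2 * k - 1 - i) (2 * k - 1)
    _ = k ^ 2 := sum_min_arith_aux k hk
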